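/- Let $G$ be a free $\mathbb{C}[t,\tau^{-1}]$-module of rank $n$ with basis $\underline{\omega}$ and a connection operator $\partial_\tau$ acting by $\partial_\tau(\underline{\omega}) = \underline{\omega}\cdot(\Omega_0 + \tau^{-1}A_\infty)$, where $\Omega_0$ is the companion-type matrix with subdiagonal entries $1$, top-right entry $c_0 t$ ($c_0 \neq 0$) and zeros elsewhere, and $A_\infty = \mathrm{diag}(-\nu_1,\dots,-\nu_n)$ with $\nu_i - \nu_{i-1} \le 1$ for $2 \le i \le n$ (and additionally $\nu_1 - \nu_n \le 1$ if $t \neq 0$). Define the filtration $\widetilde V_\alpha$ of $\mathbf{G} = G[\tau]$ by declaring $\deg(\tau^k\omega_i) = \nu_i - k$. Then for every $\alpha$, the operator $\tau\partial_\tau + \alpha$ is nilpotent on $\mathrm{gr}^{\widetilde V}_\alpha\mathbf{G}$. -/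

import Mathlib

/-- The operator `τ∂_τ` on the Gauss–Manin system `𝐆`, in the `ℂ`-basis
`τ^k ωᵢ` (indexed by `(k, i) : ℤ × Fin n`):
`τ∂_τ(τ^k ωᵢ) = (k - νᵢ) τ^k ωᵢ + τ^{k+1} ω_{i+1}` for `i < n-1`, and
`τ∂_τ(τ^k ω_{n-1}) = (k - ν_{n-1}) τ^k ω_{n-1} + c · τ^{k+1} ω₀` with `c = c₀ t`,
coming from `∂_τ(ω) = ω (Ω₀ + τ⁻¹ A_∞)` with `Ω₀` the companion-type matrix and
`A_∞ = diag(-ν₁,…,-νₙ)`. -/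
noncomputable def stmt16T (n : ℕ) [NeZero n] (ν : Fin n → ℚ) (c : ℂ) :
    ((ℤ × Fin n) →₀ ℂ) →ₗ[ℂ] ((ℤ × Fin n) →₀ ℂ) :=
  Finsupp.lsum ℂ fun p => LinearMap.toSpanSingleton ℂ _
    (((p.1 : ℂ) - (ν p.2 : ℂ)) • Finsupp.single p (1 : ℂ)
      + (if (p.2 : ℕ) + 1 = n then c else 1) • Finsupp.single (p.1 + 1, p.2 + 1) (1 : ℂ))


lemma stmt16_fin_succ_val {n : ℕ} [NeZero n] (i : Fin n) :
    ((i + 1 : Fin n) : ℕ) = if (i : ℕ) + 1 = n then 0 else (i : ℕ) + 1 := by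
  have hn := Nat.pos_of_ne_zero (NeZero.ne n)
  have hi := i.isLt
  rw [Fin.val_add_eq_ite, Fin.val_one']
  rcases eq_or_lt_of_le (Nat.succ_le_of_lt hn) with h | h
  · obtain rfl : n = 1 := h.symm
    split_ifs <;> omega
  · rw [Nat.mod_eq_of_lt h]
    split_ifs <;> omega

noncomputable abbrev stmt16W {n : ℕ} [NeZero n] (ν : Fin n → ℚ) (α : ℚ) :
    Submodule ℂ ((ℤ × Fin n) →₀ ℂ) :=
  Submodule.span ℂ
    {y | ∃ (k : ℤ) (i : Fin n), ν i - (k : ℚ) < α ∧ y = Finsupp.single (k, i) (1 : ℂ)}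

section aux

open Fin.NatCast

variable {n : ℕ} [NeZero n] (ν : Fin n → ℚ) (c : ℂ) (α : ℚ)



lemma stmt16_L_apply (p : ℤ × Fin n) :
    (stmt16T n ν c + (α : ℂ) • LinearMap.id : Module.End ℂ ((ℤ × Fin n) →₀ ℂ))
      (Finsupp.single p 1)
    = (((p.1 : ℂ) - (ν p.2 : ℂ) + α) • Finsupp.single p (1 : ℂ)
      + (if (p.2 : ℕ) + 1 = n then c else 1) • Finsupp.single (p.1 + 1, p.2 + 1) (1 : ℂ)) := by
  simp [stmt16T, Finsupp.lsum_single, LinearMap.toSpanSingleton_apply, add_smul]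
  module

variable (hν : ∀ i : Fin n, (if (i : ℕ) + 1 = n then c else 1) ≠ 0 → ν (i + 1) ≤ ν i + 1)
include hν

lemma stmt16_stable_gen (p : ℤ × Fin n) (hp : ν p.2 - (p.1 : ℚ) < α) :
    (stmt16T n ν c + (α : ℂ) • LinearMap.id : Module.End ℂ ((ℤ × Fin n) →₀ ℂ))
      (Finsupp.single p 1) ∈ stmt16W ν α := by
  rw [stmt16_L_apply]
  refine Submodule.add_mem _ (Submodule.smul_mem _ _ (Submodule.subset_span ⟨p.1, p.2, hp, rfl⟩)) ?_
  rcases eq_or_ne (if (p.2 : ℕ) + 1 = n then c else 1) 0 with h | h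
  · rw [h, zero_smul]; exact Submodule.zero_mem _
  · refine Submodule.smul_mem _ _ (Submodule.subset_span ⟨p.1 + 1, p.2 + 1, ?_, rfl⟩)
    have := hν p.2 h
    push_cast
    linarith

lemma stmt16_stable (x : (ℤ × Fin n) →₀ ℂ) (hx : x ∈ stmt16W ν α) :
    (stmt16T n ν c + (α : ℂ) • LinearMap.id : Module.End ℂ ((ℤ × Fin n) →₀ ℂ)) x ∈ stmt16W ν α := by
  induction hx using Submodule.span_induction with
  | mem y hy => obtain ⟨k, i, hk, rfl⟩ := hy; exact stmt16_stable_gen ν c α hν (k, i) hk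
  | zero => simpa using Submodule.zero_mem _
  | add y z _ _ hy hz => rw [map_add]; exact Submodule.add_mem _ hy hz
  | smul a y _ hy => rw [map_smul]; exact Submodule.smul_mem _ _ hy

lemma stmt16_main (m : ℕ) (k : ℤ) (i : Fin n) (hki : ν i - (k : ℚ) ≤ α) :
    ∃ s : ℂ, (ν (i + (m : Fin n)) - ((k + m : ℤ) : ℚ) ≤ α ∨ s = 0) ∧
      ((stmt16T n ν c + (α : ℂ) • LinearMap.id : Module.End ℂ ((ℤ × Fin n) →₀ ℂ)) ^ m)
          (Finsupp.single (k, i) 1)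
        - s • Finsupp.single (k + m, i + (m : Fin n)) (1 : ℂ) ∈ stmt16W ν α := by
  induction m with
  | zero =>
    refine ⟨1, Or.inl (by simpa using hki), ?_⟩
    simp
  | succ m ih =>
    obtain ⟨s, hcond, hmem⟩ := ih
    set L := (stmt16T n ν c + (α : ℂ) • LinearMap.id : Module.End ℂ ((ℤ × Fin n) →₀ ℂ))
    set j : Fin n := i + (m : Fin n) with hj
    set cs : ℂ := if (j : ℕ) + 1 = n then c else 1 with hcs
    refine ⟨s * cs, ?_, ?_⟩
    · rcases hcond with hcond | rfl
      · rcases eq_or_ne cs 0 with h | h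
        · exact Or.inr (by rw [h, mul_zero])
        · refine Or.inl ?_
          have h2 := hν j h
          have e2 : i + ((m + 1 : ℕ) : Fin n) = j + 1 := by
            rw [Nat.cast_add, Nat.cast_one, ← add_assoc, ← hj]
          rw [e2]
          push_cast at hcond ⊢
          linarith
      · exact Or.inr (by rw [zero_mul])
    · have e1 : (k + ((m + 1 : ℕ) : ℤ)) = (k + m) + 1 := by push_cast; ring
      have e2 : i + ((m + 1 : ℕ) : Fin n) = j + 1 := by
        rw [Nat.cast_add, Nat.cast_one, ← add_assoc, ← hj]
      rw [e1, e2, pow_succ', Module.End.mul_apply]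
      have expand : L ((L ^ m) (Finsupp.single (k, i) 1))
          = L ((L ^ m) (Finsupp.single (k, i) 1) - s • Finsupp.single (k + m, j) (1 : ℂ))
            + (s * (((k + m : ℤ) : ℂ) - (ν j : ℂ) + α)) • Finsupp.single (k + m, j) (1 : ℂ)
            + (s * cs) • Finsupp.single ((k + m) + 1, j + 1) (1 : ℂ) := by
        rw [map_sub, map_smul, stmt16_L_apply]
        module
      rw [expand]
      rw [add_sub_assoc, sub_self, add_zero]
      refine Submodule.add_mem _ (stmt16_stable ν c α hν _ hmem) ?_
      rcases hcond with hcond | rfl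
      · rcases lt_or_eq_of_le hcond with h | h
        · exact Submodule.smul_mem _ _ (Submodule.subset_span ⟨k + m, j, h, rfl⟩)
        · have hzero : ((k + m : ℤ) : ℂ) - (ν j : ℂ) + α = 0 := by
            have : (ν j : ℚ) = α + ((k + m : ℤ) : ℚ) := by linarith
            rw [this]; push_cast; ring
          rw [hzero, mul_zero, zero_smul]
          exact Submodule.zero_mem _
      · rw [zero_mul, zero_smul]
        exact Submodule.zero_mem _

end aux

/-- If the spectral candidates satisfy `νᵢ - ν_{i-1} ≤ 1` (and `ν₁ - νₙ ≤ 1` when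
`t ≠ 0`), then for the filtration `Ṽ_α` spanned by the `τ^k ωᵢ` with `νᵢ - k ≤ α`,
the operator `τ∂_τ + α` is nilpotent on each graded piece `gr^Ṽ_α 𝐆`: some power of it
maps `Ṽ_α` into `Ṽ_{<α}`.  (Hence `Ṽ` is the canonical V-filtration and the `νᵢ` are
the spectral numbers at infinity.) -/
theorem stmt16 (n : ℕ) [NeZero n] (ν : Fin n → ℚ) (c0 t : ℂ) (hc0 : c0 ≠ 0)
    (h1 : ∀ i j : Fin n, (i : ℕ) + 1 = (j : ℕ) → ν j - ν i ≤ 1)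
    (h2 : t ≠ 0 →
      ν ⟨0, Nat.pos_of_ne_zero (NeZero.ne n)⟩
        - ν ⟨n - 1, Nat.sub_lt (Nat.pos_of_ne_zero (NeZero.ne n)) Nat.one_pos⟩ ≤ 1) :
    ∀ (α : ℚ) (x : (ℤ × Fin n) →₀ ℂ),
      x ∈ Submodule.span ℂ
        {y | ∃ (k : ℤ) (i : Fin n), ν i - (k : ℚ) ≤ α ∧ y = Finsupp.single (k, i) (1 : ℂ)} →
      ∃ m : ℕ,
        (((stmt16T n ν (c0 * t) + (α : ℂ) • LinearMap.id : Module.End ℂ ((ℤ × Fin n) →₀ ℂ)) ^ m)) x ∈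
          Submodule.span ℂ
            {y | ∃ (k : ℤ) (i : Fin n), ν i - (k : ℚ) < α ∧ y = Finsupp.single (k, i) (1 : ℂ)} := by
  intro α x hx
  have hn := Nat.pos_of_ne_zero (NeZero.ne n)
  set L := (stmt16T n ν (c0 * t) + (α : ℂ) • LinearMap.id :
    Module.End ℂ ((ℤ × Fin n) →₀ ℂ)) with hL
  -- the degree hypothesis in packaged form
  have hν : ∀ i : Fin n, (if (i : ℕ) + 1 = n then c0 * t else 1) ≠ 0 → ν (i + 1) ≤ ν i + 1 := by
    intro i hi
    by_cases h : (i : ℕ) + 1 = n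
    · rw [if_pos h] at hi
      have ht : t ≠ 0 := fun h0 => hi (by rw [h0, mul_zero])
      have hval : ((i + 1 : Fin n) : ℕ) = 0 := by rw [stmt16_fin_succ_val, if_pos h]
      have hival : (i : ℕ) = n - 1 := by omega
      have e1 : i + 1 = (⟨0, hn⟩ : Fin n) := Fin.ext hval
      have e2 : i = (⟨n - 1, Nat.sub_lt hn Nat.one_pos⟩ : Fin n) := Fin.ext hival
      rw [e1, e2]
      linarith [h2 ht]
    · have hval : ((i + 1 : Fin n) : ℕ) = (i : ℕ) + 1 := by
        rw [stmt16_fin_succ_val, if_neg h]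
      linarith [h1 i (i + 1) hval.symm]
  refine ⟨n, ?_⟩
  induction hx using Submodule.span_induction with
  | mem y hy =>
    obtain ⟨k, i, hk, rfl⟩ := hy
    obtain ⟨s, hcond, hmem⟩ := stmt16_main ν (c0 * t) α hν n k i hk
    open Fin.NatCast in
    have hin : i + (n : Fin n) = i := by rw [Fin.natCast_self, add_zero]
    rw [hin] at hcond hmem
    have hdeg : ν i - ((k + n : ℤ) : ℚ) < α := by
      push_cast
      have : (1 : ℚ) ≤ (n : ℚ) := by exact_mod_cast hn
      linarith
    have hsingle : s • Finsupp.single ((k + n : ℤ), i) (1 : ℂ) ∈ Submodule.span ℂ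
        {y | ∃ (k : ℤ) (i : Fin n), ν i - (k : ℚ) < α ∧ y = Finsupp.single (k, i) (1 : ℂ)} :=
      Submodule.smul_mem _ _ (Submodule.subset_span ⟨k + n, i, hdeg, rfl⟩)
    have := Submodule.add_mem _ hmem hsingle
    rwa [sub_add_cancel] at this
  | zero => simpa using Submodule.zero_mem _
  | add y z _ _ hy hz => rw [map_add]; exact Submodule.add_mem _ hy hz
  | smul a y _ hy => rw [map_smul]; exact Submodule.smul_mem _ _ hy
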